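/- Let A, B, X be bounded operators on H with X self-adjoint, and suppose the block operator M = [[A, X],[X, B]] on H ⊕ H is positive. Then for every t ∈ (0,1), ±X ≤ (1/(2√(t(1−t)))) (tB + (1−t)A). -/

import Mathlib

open ContinuousLinearMap

variable {H : Type*} [NormedAddCommGroup H] [InnerProductSpace ℂ H] [CompleteSpace H]

/-- The 2×2 block operator `[[A, X],[Y, B]]` acting on the Hilbert space `H ⊕ H`
(realized as `WithLp 2 (H × H)`). -/
noncomputable def blockOperator (A X Y B : H →L[ℂ] H) :
    WithLp 2 (H × H) →L[ℂ] WithLp 2 (H × H) :=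
  (WithLp.prodContinuousLinearEquiv 2 ℂ H H).symm.toContinuousLinearMap ∘L
    ((A ∘L ContinuousLinearMap.fst ℂ H H + X ∘L ContinuousLinearMap.snd ℂ H H).prod
      (Y ∘L ContinuousLinearMap.fst ℂ H H + B ∘L ContinuousLinearMap.snd ℂ H H)) ∘L
    (WithLp.prodContinuousLinearEquiv 2 ℂ H H).toContinuousLinearMap

lemma blockOperator_apply_symm (A X Y B : H →L[ℂ] H) (u w : H) :
    blockOperator A X Y B ((WithLp.prodContinuousLinearEquiv 2 ℂ H H).symm (u, w)) =
    (WithLp.prodContinuousLinearEquiv 2 ℂ H H).symm (A u + X w, Y u + B w) := by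
  simp [blockOperator]

lemma inner_symm_pair (a b u w : H) :
    (inner ℂ ((WithLp.prodContinuousLinearEquiv 2 ℂ H H).symm (a, b))
      ((WithLp.prodContinuousLinearEquiv 2 ℂ H H).symm (u, w)) : ℂ) =
    inner ℂ a u + inner ℂ b w := by
  rw [WithLp.prod_inner_apply]; rfl

/-- If `X` is self-adjoint and `[[A, X],[X, B]] ≥ 0`, then for every `t ∈ (0,1)`,
`±X ≤ (1/(2√(t(1−t)))) (t B + (1−t) A)`. -/
theorem blockOperator_isPositive_pm_upper_bound
    (A B X : H →L[ℂ] H) (hX : IsSelfAdjoint X)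
    (hM : (blockOperator A X X B).IsPositive) :
    ∀ t : ℝ, 0 < t → t < 1 →
      (((1 / (2 * Real.sqrt (t * (1 - t))) : ℝ) : ℂ) •
          ((t : ℂ) • B + ((1 - t : ℝ) : ℂ) • A) - X).IsPositive ∧
      (((1 / (2 * Real.sqrt (t * (1 - t))) : ℝ) : ℂ) •
          ((t : ℂ) • B + ((1 - t : ℝ) : ℂ) • A) + X).IsPositive := by
  intro t ht0 ht1
  have hsym := hM.1
  -- A and B are self-adjoint
  have hA : IsSelfAdjoint A := by
    rw [isSelfAdjoint_iff_isSymmetric]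
    intro x y
    have h := hsym ((WithLp.prodContinuousLinearEquiv 2 ℂ H H).symm (x, 0))
      ((WithLp.prodContinuousLinearEquiv 2 ℂ H H).symm (y, 0))
    simp only [ContinuousLinearMap.coe_coe] at h
    rw [blockOperator_apply_symm, blockOperator_apply_symm, inner_symm_pair,
      inner_symm_pair] at h
    simpa using h
  have hB : IsSelfAdjoint B := by
    rw [isSelfAdjoint_iff_isSymmetric]
    intro x y
    have h := hsym ((WithLp.prodContinuousLinearEquiv 2 ℂ H H).symm (0, x))
      ((WithLp.prodContinuousLinearEquiv 2 ℂ H H).symm (0, y))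
    simp only [ContinuousLinearMap.coe_coe] at h
    rw [blockOperator_apply_symm, blockOperator_apply_symm, inner_symm_pair,
      inner_symm_pair] at h
    simpa using h
  -- key quadratic inequality
  have quad : ∀ (α β : ℝ) (x : H),
      0 ≤ α ^ 2 * (inner ℂ (A x) x : ℂ).re + β ^ 2 * (inner ℂ (B x) x : ℂ).re
        + 2 * (α * β) * (inner ℂ (X x) x : ℂ).re := by
    intro α β x
    have h := hM.2 ((WithLp.prodContinuousLinearEquiv 2 ℂ H H).symm
      ((α : ℂ) • x, (β : ℂ) • x))
    rw [reApplyInnerSelf_apply, blockOperator_apply_symm, inner_symm_pair] at h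
    simp only [map_smul, inner_add_left, inner_smul_left, inner_smul_right,
      Complex.conj_ofReal, RCLike.re_to_complex, Complex.add_re, Complex.mul_re,
      Complex.ofReal_re, Complex.ofReal_im] at h
    nlinarith [h]
  set s := Real.sqrt (t * (1 - t)) with hs_def
  have hs : 0 < s := Real.sqrt_pos.2 (by nlinarith)
  set c : ℝ := 1 / (2 * s) with hc_def
  have hc : 0 < c := by positivity
  have hs2 : s ^ 2 = t * (1 - t) := Real.sq_sqrt (by nlinarith)
  set α : ℝ := Real.sqrt (c * (1 - t)) with hα_def
  set β : ℝ := Real.sqrt (c * t) with hβ_def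
  have hα2 : α ^ 2 = c * (1 - t) := Real.sq_sqrt (mul_nonneg hc.le (by linarith))
  have hβ2 : β ^ 2 = c * t := Real.sq_sqrt (mul_nonneg hc.le ht0.le)
  have hαβ : α * β = 1 / 2 := by
    rw [hα_def, hβ_def, ← Real.sqrt_mul (mul_nonneg hc.le (by linarith))]
    rw [show c * (1 - t) * (c * t) = (1 / 2 : ℝ) ^ 2 by
      rw [hc_def]; field_simp; nlinarith]
    exact Real.sqrt_sq (by norm_num)
  -- pointwise real inequality for the goal operators
  have main : ∀ (ε : ℝ) (x : H), ε = 1 ∨ ε = -1 →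
      0 ≤ c * ((1 - t) * (inner ℂ (A x) x : ℂ).re) + c * (t * (inner ℂ (B x) x : ℂ).re)
        + ε * (inner ℂ (X x) x : ℂ).re := by
    intro ε x hε
    have h := quad α (ε * β) x
    have h2 : (ε * β) ^ 2 = β ^ 2 := by rcases hε with h' | h' <;> rw [h'] <;> ring
    rw [h2, hα2, hβ2] at h
    have hab : α * (ε * β) = ε * (1 / 2) := by rw [← hαβ]; ring
    rw [hab] at h
    rcases hε with rfl | rfl <;> linarith
  have hre : ∀ (Z : H →L[ℂ] H) (x : H),
      ((((c : ℝ) : ℂ) • ((t : ℂ) • B + ((1 - t : ℝ) : ℂ) • A) + Z).reApplyInnerSelf x) =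
      c * (t * (inner ℂ (B x) x : ℂ).re) + c * ((1 - t) * (inner ℂ (A x) x : ℂ).re)
        + (inner ℂ (Z x) x : ℂ).re := by
    intro Z x
    rw [reApplyInnerSelf_apply]
    simp only [add_apply, smul_apply, inner_add_left, inner_smul_left, map_mul, map_sub,
      map_one, Complex.conj_ofReal, RCLike.re_to_complex, Complex.add_re, Complex.mul_re,
      Complex.mul_im, Complex.sub_re, Complex.sub_im, Complex.one_re, Complex.one_im,
      Complex.ofReal_re, Complex.ofReal_im]
    ring
  have hsaY : IsSelfAdjoint (((c : ℝ) : ℂ) • ((t : ℂ) • B + ((1 - t : ℝ) : ℂ) • A)) := by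
    have h1 : IsSelfAdjoint ((c : ℂ)) := Complex.conj_ofReal c
    have h2 : IsSelfAdjoint ((t : ℂ)) := Complex.conj_ofReal t
    have h3 : IsSelfAdjoint (((1 - t : ℝ) : ℂ)) := Complex.conj_ofReal _
    exact h1.smul ((h2.smul hB).add (h3.smul hA))
  constructor
  · refine ⟨(hsaY.sub hX).isSymmetric, fun x => ?_⟩
    have := main (-1) x (Or.inr rfl)
    have hX' : (((c : ℝ) : ℂ) • ((t : ℂ) • B + ((1 - t : ℝ) : ℂ) • A) - X) =
        (((c : ℝ) : ℂ) • ((t : ℂ) • B + ((1 - t : ℝ) : ℂ) • A) + (-X)) := by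
      rw [sub_eq_add_neg]
    rw [hX', hre (-X) x]
    simp only [neg_apply, inner_neg_left, Complex.neg_re]
    linarith
  · refine ⟨(hsaY.add hX).isSymmetric, fun x => ?_⟩
    have := main 1 x (Or.inl rfl)
    rw [hre X x]
    linarith
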